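/- arXiv:2011.13419 — 2 statements merged into one kernel-verified Lean document; each statement's English description precedes it below -/
import Mathlib

section
/- Assume in addition that every complex eigenvalue of A − 𝟙_N·u (viewed as a matrix over ℂ) has modulus strictly less than 1. Let x : ℕ → Matrix (Fin N) (Fin n) ℝ and v : ℕ → Matrix (Fin 1) (Fin n) ℝ satisfy x(k) = A·x(k−1) − 𝟙_N·v(k) for every k ≥ 1. Then the disagreement x(k) − 𝟙_N·u·x(k) converges to 0 as k → ∞; in particular, for every ε > 0 there exists k₀ such that ‖x(k) − 𝟙_N·u·x(k)‖ < ε for all k > k₀. (Consensus consequence of Lemma 3 in the paper.) -/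
attribute [local instance] Matrix.frobeniusNormedAddCommGroup

open Filter

section Aux

attribute [local instance] Matrix.frobeniusNormedRing Matrix.frobeniusNormedAlgebra

lemma pow_norm_tendsto_zero {m : Type*} [Fintype m] [DecidableEq m] [Nonempty m]
    (B : Matrix m m ℂ) (h : ∀ μ ∈ spectrum ℂ B, ‖μ‖ < 1) :
    Tendsto (fun k : ℕ => ‖B ^ k‖) atTop (nhds 0) := by
  have hrad : spectralRadius ℂ B < 1 := by
    have := spectrum.spectralRadius_lt_of_forall_lt (a := B) (r := 1)
      (fun z hz => by have h' := h z hz; rw [← coe_nnnorm] at h'; exact_mod_cast h')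
    simpa using this
  have hne : spectralRadius ℂ B ≠ ⊤ := hrad.trans_le le_top |>.ne
  set c : ℝ := ((spectralRadius ℂ B).toReal + 1) / 2 with hc
  have htr : (spectralRadius ℂ B).toReal < 1 := by
    have := ENNReal.toReal_strict_mono (by simp) hrad
    simpa using this
  have htr0 : 0 ≤ (spectralRadius ℂ B).toReal := ENNReal.toReal_nonneg
  have hc0 : 0 < c := by positivity
  have hc1 : c < 1 := by rw [hc]; linarith
  have hltc : spectralRadius ℂ B < ENNReal.ofReal c := by
    rw [← ENNReal.ofReal_toReal hne]
    exact ENNReal.ofReal_lt_ofReal_iff hc0 |>.mpr (by rw [hc]; linarith)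
  have hgel := spectrum.pow_norm_pow_one_div_tendsto_nhds_spectralRadius B
  have hev : ∀ᶠ k : ℕ in atTop, ENNReal.ofReal (‖B ^ k‖ ^ (1 / (k:ℝ))) < ENNReal.ofReal c :=
    hgel.eventually_lt_const hltc
  have hev2 : ∀ᶠ k : ℕ in atTop, ‖B ^ k‖ ≤ c ^ k := by
    filter_upwards [hev, eventually_ge_atTop 1] with k hk hk1
    have hk' : (‖B ^ k‖ : ℝ) ^ (1 / (k:ℝ)) < c :=
      (ENNReal.ofReal_lt_ofReal_iff hc0).mp hk
    have hx0 : (0:ℝ) ≤ ‖B ^ k‖ := norm_nonneg _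
    have hkne : (k:ℝ) ≠ 0 := by positivity
    have : (‖B ^ k‖ ^ (1 / (k:ℝ))) ^ k < c ^ k :=
      pow_lt_pow_left₀ hk' (Real.rpow_nonneg hx0 _) (by omega)
    calc ‖B ^ k‖ = (‖B ^ k‖ ^ (1 / (k:ℝ))) ^ k := by
          rw [← Real.rpow_natCast (‖B ^ k‖ ^ (1 / (k:ℝ))) k, ← Real.rpow_mul hx0,
            one_div, inv_mul_cancel₀ hkne, Real.rpow_one]
      _ ≤ c ^ k := this.le
  exact squeeze_zero' (Eventually.of_forall fun k => norm_nonneg _) hev2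
    (tendsto_pow_atTop_nhds_zero_of_lt_one hc0.le hc1)

end Aux

/-- Consensus consequence of Lemma 3: under the spectral condition on
`A - 𝟙_N·u`, the disagreement `x(k) - 𝟙_N·u·x(k)` of the iterates
`x(k) = A·x(k-1) - 𝟙_N·v(k)` converges to `0`; in particular for every `ε > 0`
there is `k₀` with `‖x(k) - 𝟙_N·u·x(k)‖ < ε` for all `k > k₀`. -/
theorem disagreement_tendsto_zero
    (N n : ℕ) (hN : 0 < N) (hn : 0 < n)
    (A : Matrix (Fin N) (Fin N) ℝ)
    (one : Matrix (Fin N) (Fin 1) ℝ) (hone : ∀ i j, one i j = 1)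
    (u : Matrix (Fin 1) (Fin N) ℝ)
    (hrow : A * one = one) (huA : u * A = u) (hu1 : u * one = 1)
    (hspec : ∀ μ : ℂ,
      μ ∈ spectrum ℂ ((A - one * u).map (algebraMap ℝ ℂ)) → ‖μ‖ < 1)
    (x : ℕ → Matrix (Fin N) (Fin n) ℝ)
    (v : ℕ → Matrix (Fin 1) (Fin n) ℝ)
    (hrec : ∀ k, 1 ≤ k → x k = A * x (k - 1) - one * v k) :
    Filter.Tendsto (fun k : ℕ => x k - one * u * x k) Filter.atTop (nhds 0) ∧
      ∀ ε : ℝ, 0 < ε → ∃ k₀ : ℕ, ∀ k, k₀ < k → ‖x k - one * u * x k‖ < ε := by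
  haveI : Nonempty (Fin N) := Fin.pos_iff_nonempty.mp hN
  set B : Matrix (Fin N) (Fin N) ℝ := A - one * u with hB
  -- helper rewrites
  have huAz : ∀ (z : Matrix (Fin N) (Fin n) ℝ), u * (A * z) = u * z := fun z => by
    rw [← Matrix.mul_assoc, huA]
  have hu1z : ∀ (z : Matrix (Fin 1) (Fin n) ℝ), u * (one * z) = z := fun z => by
    rw [← Matrix.mul_assoc, hu1, Matrix.one_mul]
  have hrowz : ∀ (z : Matrix (Fin 1) (Fin n) ℝ), A * (one * z) = one * z := fun z => by
    rw [← Matrix.mul_assoc, hrow]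
  -- key recursion
  have key : ∀ k : ℕ, x k - one * u * x k = B ^ k * (x 0 - one * u * x 0) := by
    intro k
    induction k with
    | zero => simp
    | succ k ih =>
      have h1 : x (k + 1) = A * x k - one * v (k + 1) := by
        simpa using hrec (k + 1) (by omega)
      have step : x (k + 1) - one * u * x (k + 1) = B * (x k - one * u * x k) := by
        rw [h1, hB]
        simp only [Matrix.mul_sub, Matrix.sub_mul, Matrix.mul_assoc, huAz, hu1z, hrowz]
        abel
      rw [step, ih, ← Matrix.mul_assoc, ← pow_succ']
  -- norm bound via complex matrix
  set Bc : Matrix (Fin N) (Fin N) ℂ := B.map (algebraMap ℝ ℂ) with hBc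
  have hnorm : ∀ k : ℕ, ‖B ^ k‖ = ‖Bc ^ k‖ := by
    intro k
    have hmap : Bc ^ k = (B ^ k).map (algebraMap ℝ ℂ) := by
      rw [hBc]
      exact (map_pow (RingHom.mapMatrix (algebraMap ℝ ℂ)) B k).symm
    rw [hmap]
    exact (Matrix.frobenius_norm_map_eq (B ^ k) (algebraMap ℝ ℂ)
      (fun a => by simp)).symm
  have hpow : Tendsto (fun k : ℕ => ‖B ^ k‖) atTop (nhds 0) := by
    simp_rw [hnorm]
    exact pow_norm_tendsto_zero Bc (fun μ hμ => hspec μ hμ)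
  have hbound : ∀ k : ℕ, ‖x k - one * u * x k‖ ≤ ‖B ^ k‖ * ‖x 0 - one * u * x 0‖ := by
    intro k
    rw [key k]
    exact Matrix.frobenius_norm_mul _ _
  have htendnorm : Tendsto (fun k : ℕ => ‖x k - one * u * x k‖) atTop (nhds 0) := by
    refine squeeze_zero (fun k => norm_nonneg _) hbound ?_
    simpa using hpow.mul_const ‖x 0 - one * u * x 0‖
  have htend : Tendsto (fun k : ℕ => x k - one * u * x k) atTop (nhds 0) :=
    tendsto_zero_iff_norm_tendsto_zero.mpr htendnorm
  refine ⟨htend, fun ε hε => ?_⟩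
  obtain ⟨k₀, hk₀⟩ := (Metric.tendsto_atTop.mp htend ε hε)
  exact ⟨k₀, fun k hk => by simpa [dist_eq_norm] using hk₀ k hk.le⟩
end

section
/- Let f_i : E → ℝ for i = 1,…,N be differentiable, σ_i-strongly convex (σ_i > 0), with l_i-Lipschitz gradients (l_i > 0), let w_i ≥ 0 be weights, let x* ∈ E, and let α ≥ 0. Then for every y ∈ E, ‖(y − x*) − α·Σ_i w_i·(∇f_i(y) − ∇f_i(x*))‖² ≤ (1 + N·Σ_i (α·w_i·l_i)² − 2α·Σ_i w_i·σ_i)·‖y − x*‖². (Core contraction estimate underlying Theorem 1 of the paper, obtained by splitting the sum over agents, applying the extension of co-coercivity, and using the Lipschitz bound on each gradient difference.) -/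
open InnerProductSpace Set

/-- Monotonicity of the gradient of a convex function. -/
lemma grad_mono_aux {E : Type*} [NormedAddCommGroup E] [InnerProductSpace ℝ E] [CompleteSpace E]
    (h : E → ℝ) (h' : E → E) (hconv : ConvexOn ℝ Set.univ h)
    (hg : ∀ x, HasGradientAt h (h' x) x) (x y : E) :
    (inner ℝ (h' x) (y - x) : ℝ) ≤ inner ℝ (h' y) (y - x) := by
  set φ : ℝ → ℝ := fun t => h (AffineMap.lineMap x y t) with hφ
  have hφconv : ConvexOn ℝ Set.univ φ := by
    have := hconv.comp_affineMap (AffineMap.lineMap x y)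
    exact this
  have hφd : ∀ t : ℝ, HasDerivAt φ (inner ℝ (h' (AffineMap.lineMap x y t)) (y - x)) t := by
    intro t
    have hc : HasDerivAt (fun t : ℝ => AffineMap.lineMap x y t) (y - x) t := by
      simp only [AffineMap.lineMap_apply]
      simpa using ((hasDerivAt_id t).smul_const (y - x)).add_const x
    have := ((hg (AffineMap.lineMap x y t)).hasFDerivAt).comp_hasDerivAt t hc
    simp [InnerProductSpace.toDual_apply_apply] at this; exact this
  have h1 := hφconv.le_slope_of_hasDerivAt (mem_univ (0:ℝ)) (mem_univ (1:ℝ)) one_pos (hφd 0)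
  have h2 := hφconv.slope_le_of_hasDerivAt (mem_univ (0:ℝ)) (mem_univ (1:ℝ)) one_pos (hφd 1)
  have := h1.trans h2
  simpa using this

/-- Strong monotonicity of the gradient of a strongly convex function. -/
lemma strong_grad_aux {E : Type*} [NormedAddCommGroup E] [InnerProductSpace ℝ E] [CompleteSpace E]
    (g : E → ℝ) (g' : E → E) (σ : ℝ)
    (hg : ∀ x, HasGradientAt g (g' x) x)
    (hsc : ConvexOn ℝ Set.univ (fun x => g x - σ / 2 * ‖x‖ ^ 2)) (x y : E) :
    σ * ‖y - x‖ ^ 2 ≤ inner ℝ (g' y - g' x) (y - x) := by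
  have hns : ∀ z : E, HasGradientAt (fun u => g u - σ / 2 * ‖u‖ ^ 2) (g' z - σ • z) z := by
    intro z
    rw [hasGradientAt_iff_hasFDerivAt]
    have hsq : HasFDerivAt (fun u : E => σ / 2 * ‖u‖ ^ 2)
        ((σ / 2) • (2 • (innerSL ℝ z))) z :=
      ((hasStrictFDerivAt_norm_sq z).hasFDerivAt).const_mul (σ / 2)
    have := ((hg z).hasFDerivAt).sub hsq
    refine this.congr_fderiv ?_
    ext v
    simp [InnerProductSpace.toDual_apply_apply, inner_sub_left, inner_smul_left]
    ring
  have := grad_mono_aux _ _ hsc hns x y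
  have hin : (inner ℝ ((g' y - σ • y) - (g' x - σ • x)) (y - x) : ℝ)
      = inner ℝ (g' y - g' x) (y - x) - σ * ‖y - x‖ ^ 2 := by
    rw [show (g' y - σ • y) - (g' x - σ • x) = (g' y - g' x) - σ • (y - x) by
      simp [smul_sub]; abel]
    rw [inner_sub_left, real_inner_smul_left, real_inner_self_eq_norm_sq]
  have key : (0:ℝ) ≤ inner ℝ ((g' y - σ • y) - (g' x - σ • x)) (y - x) := by
    rw [inner_sub_left]; linarith
  linarith [key, hin]

/-- Core contraction estimate of Theorem 1: for `σ_i`-strongly convex `f_i`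
with `l_i`-Lipschitz gradients `f'_i`, nonnegative weights `w_i` and `α ≥ 0`,
`‖(y - x*) - α Σ_i w_i (∇f_i(y) - ∇f_i(x*))‖² ≤
  (1 + N Σ_i (α w_i l_i)² - 2α Σ_i w_i σ_i) ‖y - x*‖²`. -/
theorem weighted_gradient_step_contraction
    {E : Type*} [NormedAddCommGroup E] [InnerProductSpace ℝ E] [CompleteSpace E]
    (N : ℕ) (hN : 0 < N)
    (f : Fin N → E → ℝ) (f' : Fin N → E → E) (σ l : Fin N → ℝ)
    (hσ : ∀ i, 0 < σ i) (hl : ∀ i, 0 < l i)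
    (hgrad : ∀ i x, HasGradientAt (f i) (f' i x) x)
    (hstrong : ∀ i, ConvexOn ℝ Set.univ (fun x => f i x - σ i / 2 * ‖x‖ ^ 2))
    (hlip : ∀ i x y, ‖f' i x - f' i y‖ ≤ l i * ‖x - y‖)
    (w : Fin N → ℝ) (hw : ∀ i, 0 ≤ w i)
    (xstar : E) (α : ℝ) (hα : 0 ≤ α) :
    ∀ y : E,
      ‖(y - xstar) - α • ∑ i, w i • (f' i y - f' i xstar)‖ ^ 2 ≤
        (1 + (N : ℝ) * ∑ i, (α * w i * l i) ^ 2 - 2 * α * ∑ i, w i * σ i) *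
          ‖y - xstar‖ ^ 2 := by
  intro y
  set d := y - xstar with hd
  set g : Fin N → E := fun i => f' i y - f' i xstar with hgdef
  have hg_norm : ∀ i, ‖g i‖ ≤ l i * ‖d‖ := fun i => hlip i y xstar
  have hsg : ∀ i, σ i * ‖d‖ ^ 2 ≤ inner ℝ (g i) d := fun i =>
    strong_grad_aux (f i) (f' i) (σ i) (hgrad i) (hstrong i) xstar y
  set S := ∑ i, w i • g i with hS
  -- lower bound on the cross term
  have hlow : (∑ i, w i * σ i) * ‖d‖ ^ 2 ≤ inner ℝ d S := by
    have hinner : (inner ℝ d S : ℝ) = ∑ i, w i * inner ℝ d (g i) := by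
      rw [hS, inner_sum]
      exact Finset.sum_congr rfl fun i _ => real_inner_smul_right d (g i) (w i)
    rw [hinner, Finset.sum_mul]
    refine Finset.sum_le_sum fun i _ => ?_
    have h1 : σ i * ‖d‖ ^ 2 ≤ inner ℝ d (g i) := by rw [real_inner_comm]; exact hsg i
    calc w i * σ i * ‖d‖ ^ 2 = w i * (σ i * ‖d‖ ^ 2) := by ring
    _ ≤ w i * inner ℝ d (g i) := mul_le_mul_of_nonneg_left h1 (hw i)
  -- upper bound on ‖S‖²
  have hSnorm : ‖S‖ ≤ ∑ i, w i * l i * ‖d‖ := by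
    calc ‖S‖ ≤ ∑ i, ‖w i • g i‖ := norm_sum_le _ _
    _ ≤ ∑ i, w i * l i * ‖d‖ := by
        refine Finset.sum_le_sum fun i _ => ?_
        rw [norm_smul, Real.norm_eq_abs, abs_of_nonneg (hw i)]
        calc w i * ‖g i‖ ≤ w i * (l i * ‖d‖) :=
              mul_le_mul_of_nonneg_left (hg_norm i) (hw i)
        _ = w i * l i * ‖d‖ := by ring
  have hSsq : ‖S‖ ^ 2 ≤ (N : ℝ) * ∑ i, (w i * l i) ^ 2 * ‖d‖ ^ 2 := by
    have h1 : ‖S‖ ^ 2 ≤ (∑ i, w i * l i * ‖d‖) ^ 2 :=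
      pow_le_pow_left₀ (norm_nonneg _) hSnorm 2
    have h2 := sq_sum_le_card_mul_sum_sq (s := (Finset.univ : Finset (Fin N)))
      (f := fun i => w i * l i * ‖d‖)
    simp only [Finset.card_univ, Fintype.card_fin] at h2
    calc ‖S‖ ^ 2 ≤ (∑ i, w i * l i * ‖d‖) ^ 2 := h1
    _ ≤ (N : ℝ) * ∑ i, (w i * l i * ‖d‖) ^ 2 := h2
    _ = (N : ℝ) * ∑ i, (w i * l i) ^ 2 * ‖d‖ ^ 2 := by
        congr 1; exact Finset.sum_congr rfl fun i _ => by ring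
  -- expansion of the squared norm
  have hexp : ‖d - α • S‖ ^ 2 = ‖d‖ ^ 2 - 2 * (α * inner ℝ d S) + α ^ 2 * ‖S‖ ^ 2 := by
    rw [norm_sub_sq_real, real_inner_smul_right, norm_smul, Real.norm_eq_abs,
      abs_of_nonneg hα, mul_pow]
  have hsum1 : ∑ i, (α * w i * l i) ^ 2 = α ^ 2 * ∑ i, (w i * l i) ^ 2 := by
    rw [Finset.mul_sum]; exact Finset.sum_congr rfl fun i _ => by ring
  have hsum2 : (N : ℝ) * ∑ i, (w i * l i) ^ 2 * ‖d‖ ^ 2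
      = ((N : ℝ) * ∑ i, (w i * l i) ^ 2) * ‖d‖ ^ 2 := by
    rw [← Finset.sum_mul]; ring
  rw [hexp, hsum1]
  have hq := mul_le_mul_of_nonneg_left hSsq (sq_nonneg α)
  have hc := mul_le_mul_of_nonneg_left hlow (by positivity : (0:ℝ) ≤ 2 * α)
  rw [hsum2] at hq
  nlinarith [hq, hc]
end
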